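/- Let R = ℤ₍₂₎ ∩ ℤ₍₃₎ = { m/n ∈ ℚ : m, n ∈ ℤ, 2 ∤ n and 3 ∤ n } (a subring of ℚ) and let S = M₂(R). Then the matrix F = [[3, 0], [6, 3]] ∈ S satisfies F² − F ∈ J(S), but there is no idempotent E ∈ S such that F − E ∈ J(S); that is, the idempotent F + J(S) of S/J(S) cannot be lifted to an idempotent of S modulo the Jacobson radical J(S). -/

import Mathlib

namespace Stmt7Aux

/-- cross-multiplication -/
lemma cross {q : ℚ} {z n : ℤ} (h : q * (n:ℚ) = (z:ℚ)) : q.num * n = z * q.den := by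
  have hd : ((q.den:ℚ)) ≠ 0 := by exact_mod_cast q.den_ne_zero
  have hq : (q.num : ℚ) = q * (q.den:ℚ) := (div_eq_iff hd).mp (Rat.num_div_den q)
  have h2 : (q.num : ℚ) * (n:ℚ) = (z:ℚ) * (q.den:ℚ) := by
    rw [hq, mul_right_comm, h]
  exact_mod_cast h2

section
variable {R : Subring ℚ}
  (hR : ∀ q : ℚ, q ∈ R ↔ ∃ m n : ℤ, ¬ (2 ∣ n) ∧ ¬ (3 ∣ n) ∧ q = (m : ℚ) / (n : ℚ))
include hR

lemma den_coprime (x : R) :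
    ¬ (2:ℤ) ∣ ((x:ℚ).den : ℤ) ∧ ¬ (3:ℤ) ∣ ((x:ℚ).den : ℤ) := by
  obtain ⟨m, n, h2, h3, he⟩ := (hR x).mp x.2
  have hd : (((x:ℚ)).den : ℤ) ∣ n := by
    rw [he, ← Rat.divInt_eq_div]; exact Rat.den_dvd m n
  exact ⟨fun h => h2 (h.trans hd), fun h => h3 (h.trans hd)⟩

lemma not_unit_of_num {x : R} {p : ℤ} (hp : Prime p) (hp' : p = 2 ∨ p = 3)
    (h : p ∣ (x:ℚ).num) : ¬ IsUnit x := by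
  intro hu
  obtain ⟨y, hy⟩ := hu.exists_right_inv
  have hy' : ((x:ℚ)) * ((y:ℚ)) = 1 := by exact_mod_cast congrArg (Subtype.val) hy
  have hyd : (((y:ℚ)).den:ℚ) ≠ 0 := by exact_mod_cast (y:ℚ).den_ne_zero
  have h1 : (x:ℚ) * (((y:ℚ)).num : ℚ) = ((((y:ℚ)).den : ℤ) : ℚ) := by
    have hq : (((y:ℚ)).num : ℚ) = (y:ℚ) * (((y:ℚ)).den:ℚ) :=
      (div_eq_iff hyd).mp (Rat.num_div_den (y:ℚ))
    rw [hq, ← mul_assoc, hy', one_mul]; norm_num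
  have h2 := cross h1
  -- (x:ℚ).num * (y:ℚ).num = (y:ℚ).den * (x:ℚ).den
  have hdx := den_coprime hR x
  have hdy := den_coprime hR y
  have : p ∣ ((y:ℚ)).den * ((x:ℚ)).den := h2 ▸ h.mul_right _
  rcases hp.dvd_mul.mp this with h' | h'
  · rcases hp' with rfl | rfl
    exacts [hdy.1 h', hdy.2 h']
  · rcases hp' with rfl | rfl
    exacts [hdx.1 h', hdx.2 h']

lemma isUnit_of_num {x : R} (h2 : ¬ (2:ℤ) ∣ (x:ℚ).num) (h3 : ¬ (3:ℤ) ∣ (x:ℚ).num) :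
    IsUnit x := by
  have hnum : (x:ℚ).num ≠ 0 := fun h => h2 (h ▸ dvd_zero 2)
  have hx0 : (x:ℚ) ≠ 0 := Rat.num_ne_zero.mp hnum
  have hmem : ((x:ℚ))⁻¹ ∈ R := by
    rw [hR]
    refine ⟨((x:ℚ)).den, ((x:ℚ)).num, h2, h3, ?_⟩
    rw [eq_div_iff (by exact_mod_cast hnum)]
    have hd : (((x:ℚ)).den:ℚ) ≠ 0 := by exact_mod_cast (x:ℚ).den_ne_zero
    field_simp
    exact (div_eq_iff hd).mp (Rat.num_div_den _)
  refine IsUnit.of_mul_eq_one (a := x) ⟨((x:ℚ))⁻¹, hmem⟩ ?_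
  ext
  push_cast
  exact mul_inv_cancel₀ hx0

/-- `1 + 6c` is a unit of `R`. -/
lemma isUnit_one_add_six (c : R) : IsUnit ((1:R) + 6 * c) := by
  obtain ⟨m, n, h2, h3, he⟩ := (hR c).mp c.2
  have hn0 : (n:ℚ) ≠ 0 := by
    have : n ≠ 0 := fun h => h2 (h ▸ dvd_zero 2)
    exact_mod_cast this
  set q : ℚ := ((((1:R) + 6*c : R)):ℚ) with hq
  have h6 : ((6:R):ℚ) = 6 := by norm_cast
  have hq' : q = 1 + 6 * ((c:ℚ)) := by rw [hq]; push_cast [h6]; ring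
  have hcn : ((c:ℚ)) * n = m := by rw [he, div_mul_cancel₀ _ hn0]
  have hqn : q * (n:ℚ) = (((n + 6*m : ℤ)):ℚ) := by
    push_cast; rw [hq']; ring_nf; nlinarith [hcn]
  have hcross := cross hqn
  apply isUnit_of_num hR
  · intro hd
    have : (2:ℤ) ∣ (n + 6*m) * q.den := hcross ▸ (hd.mul_right n)
    have h2' := (den_coprime hR ((1:R) + 6*c)).1
    rcases (Int.prime_two.dvd_mul.mp this) with h' | h'
    · exact h2 (by omega)
    · exact h2' h'
  · intro hd
    have : (3:ℤ) ∣ (n + 6*m) * q.den := hcross ▸ (hd.mul_right n)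
    have h3' := (den_coprime hR ((1:R) + 6*c)).2
    rcases (Int.prime_three.dvd_mul.mp this) with h' | h'
    · exact h3 (by omega)
    · exact h3' h'

/-- `2 + 6b` is not a unit of `R`. -/
lemma not_isUnit_two_add_six (b : R) : ¬ IsUnit ((2:R) + 6 * b) := by
  obtain ⟨m, n, h2, h3, he⟩ := (hR b).mp b.2
  have hn0 : (n:ℚ) ≠ 0 := by
    have : n ≠ 0 := fun h => h2 (h ▸ dvd_zero 2)
    exact_mod_cast this
  set q : ℚ := ((((2:R) + 6*b : R)):ℚ) with hq
  have h6 : ((6:R):ℚ) = 6 := by norm_cast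
  have h2c : ((2:R):ℚ) = 2 := by norm_cast
  have hq' : q = 2 + 6 * ((b:ℚ)) := by rw [hq]; push_cast [h6, h2c]; ring
  have hcn : ((b:ℚ)) * n = m := by rw [he, div_mul_cancel₀ _ hn0]
  have hqn : q * (n:ℚ) = (((2*n + 6*m : ℤ)):ℚ) := by
    push_cast; rw [hq']; ring_nf; nlinarith [hcn]
  have hcross := cross hqn
  apply not_unit_of_num hR Int.prime_two (Or.inl rfl)
  have : (2:ℤ) ∣ q.num * n := by rw [hcross]; exact Dvd.dvd.mul_right ⟨n + 3*m, by ring⟩ _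
  rcases Int.prime_two.dvd_mul.mp this with h' | h'
  · exact h'
  · exact absurd h' h2

end

section
variable {S : Type*} [Ring S]

lemma mem_jacobson_of_units {x : S} (h : ∀ y : S, IsUnit (1 + y * x)) :
    x ∈ Ideal.jacobson (⊥ : Ideal S) := by
  rw [Ideal.mem_jacobson_iff]
  intro y
  obtain ⟨u, hu⟩ := h y
  refine ⟨↑u⁻¹, ?_⟩
  rw [Ideal.mem_bot]
  have h1 : (↑u⁻¹ : S) * (1 + y * x) = 1 := by rw [← hu]; exact u.inv_mul
  calc (↑u⁻¹ : S) * y * x + ↑u⁻¹ - 1 = ↑u⁻¹ * (1 + y * x) - 1 := by noncomm_ring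
    _ = 0 := by rw [h1, sub_self]

lemma exists_left_inv_one_sub {x : S} (hx : x ∈ Ideal.jacobson (⊥ : Ideal S)) :
    ∃ z : S, z * (1 - x) = 1 := by
  obtain ⟨z, hz⟩ := Ideal.mem_jacobson_iff.mp hx (-1)
  rw [Ideal.mem_bot] at hz
  refine ⟨z, ?_⟩
  have h := sub_eq_zero.mp hz
  calc z * (1 - x) = z * (-1) * x + z := by noncomm_ring
    _ = 1 := h

lemma exists_left_inv_one_add {x : S} (hx : x ∈ Ideal.jacobson (⊥ : Ideal S)) :
    ∃ z : S, z * (1 + x) = 1 := by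
  obtain ⟨z, hz⟩ := Ideal.mem_jacobson_iff.mp hx 1
  rw [Ideal.mem_bot] at hz
  refine ⟨z, ?_⟩
  have h := sub_eq_zero.mp hz
  calc z * (1 + x) = z * 1 * x + z := by noncomm_ring
    _ = 1 := h

end
end Stmt7Aux

open Stmt7Aux in
set_option maxHeartbeats 4000000 in
theorem stmt_7 (R : Subring ℚ)
    (hR : ∀ q : ℚ, q ∈ R ↔ ∃ m n : ℤ, ¬ (2 ∣ n) ∧ ¬ (3 ∣ n) ∧ q = (m : ℚ) / (n : ℚ)) :
    (!![(3 : R), 0; 6, 3] ^ 2 - !![(3 : R), 0; 6, 3]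
        ∈ Ideal.jacobson (⊥ : Ideal (Matrix (Fin 2) (Fin 2) R))) ∧
    ¬ ∃ E : Matrix (Fin 2) (Fin 2) R, IsIdempotentElem E ∧
        !![(3 : R), 0; 6, 3] - E ∈ Ideal.jacobson (⊥ : Ideal (Matrix (Fin 2) (Fin 2) R)) := by
  set F : Matrix (Fin 2) (Fin 2) R := !![(3 : R), 0; 6, 3] with hF
  constructor
  · -- Part 1 : F² - F ∈ J(S)
    have hX : F ^ 2 - F = !![(6:R), 0; 30, 6] := by
      rw [pow_two, hF, Matrix.mul_fin_two]
      ext i j : 2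
      fin_cases i <;> fin_cases j <;> simp [Matrix.sub_apply] <;> norm_cast
    rw [hX]
    apply mem_jacobson_of_units
    intro y
    have hM : (1 : Matrix (Fin 2) (Fin 2) R) + y * !![(6:R), 0; 30, 6] =
        !![1 + (y 0 0 * 6 + y 0 1 * 30), y 0 1 * 6;
           y 1 0 * 6 + y 1 1 * 30, 1 + y 1 1 * 6] := by
      conv_lhs => rw [Matrix.eta_fin_two y, Matrix.mul_fin_two, Matrix.one_fin_two]
      ext i j : 2
      fin_cases i <;> fin_cases j <;> simp [Matrix.add_apply]
    have hU : IsUnit ((1 : Matrix (Fin 2) (Fin 2) R) + y * !![(6:R), 0; 30, 6]) := by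
      rw [Matrix.isUnit_iff_isUnit_det, hM, Matrix.det_fin_two_of]
      have he : (1 + (y 0 0 * 6 + y 0 1 * 30)) * (1 + y 1 1 * 6)
          - y 0 1 * 6 * (y 1 0 * 6 + y 1 1 * 30)
          = 1 + 6 * (y 0 0 + y 1 1 + 5 * y 0 1 + 6 * (y 0 0 * y 1 1)
            - 6 * (y 0 1 * y 1 0) + 30 * (y 0 1 * y 1 1) - 30 * (y 0 1 * y 1 1)) := by
        ring
      rw [he]
      exact isUnit_one_add_six hR _
    exact hU
  · -- Part 2 : no idempotent lift
    rintro ⟨E, hE, hJ⟩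
    have hEE := hE
    rw [IsIdempotentElem] at hEE
    -- idempotent entry equations
    have h00 : E 0 0 * E 0 0 + E 0 1 * E 1 0 = E 0 0 := by
      have h2 : (E * E) 0 0 = E 0 0 := by rw [hEE]
      rw [Matrix.mul_apply, Fin.sum_univ_two] at h2
      exact h2
    have h01 : E 0 0 * E 0 1 + E 0 1 * E 1 1 = E 0 1 := by
      have h2 : (E * E) 0 1 = E 0 1 := by rw [hEE]
      rw [Matrix.mul_apply, Fin.sum_univ_two] at h2
      exact h2
    have h11 : E 1 0 * E 0 1 + E 1 1 * E 1 1 = E 1 1 := by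
      have h2 : (E * E) 1 1 = E 1 1 := by rw [hEE]
      rw [Matrix.mul_apply, Fin.sum_univ_two] at h2
      exact h2
    -- unit consequences of Jacobson membership
    obtain ⟨z1, hinv1⟩ := exists_left_inv_one_sub hJ
    obtain ⟨z2, hinv2⟩ := exists_left_inv_one_add hJ
    have hM1 : (1 : Matrix (Fin 2) (Fin 2) R) - (F - E) =
        !![E 0 0 - 2, E 0 1; E 1 0 - 6, E 1 1 - 2] := by
      conv_lhs => rw [hF, Matrix.eta_fin_two E, Matrix.one_fin_two]
      ext i j : 2
      fin_cases i <;> fin_cases j <;> simp [Matrix.sub_apply] <;> norm_cast <;>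
        push_cast <;> ring
    have hM2 : (1 : Matrix (Fin 2) (Fin 2) R) + (F - E) =
        !![4 - E 0 0, -(E 0 1); 6 - E 1 0, 4 - E 1 1] := by
      conv_lhs => rw [hF, Matrix.eta_fin_two E, Matrix.one_fin_two]
      ext i j : 2
      fin_cases i <;> fin_cases j <;> simp [Matrix.sub_apply, Matrix.add_apply] <;>
        norm_cast <;> push_cast <;> ring
    have hu1 : IsUnit ((E 0 0 - 2) * (E 1 1 - 2) - E 0 1 * (E 1 0 - 6)) := by
      have hd1 := congrArg Matrix.det hinv1
      rw [Matrix.det_mul, Matrix.det_one, hM1, Matrix.det_fin_two_of] at hd1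
      exact IsUnit.of_mul_eq_one _ ((mul_comm _ _).trans hd1)
    have hu2 : IsUnit ((4 - E 0 0) * (4 - E 1 1) - (-(E 0 1)) * (6 - E 1 0)) := by
      have hd2 := congrArg Matrix.det hinv2
      rw [Matrix.det_mul, Matrix.det_one, hM2, Matrix.det_fin_two_of] at hd2
      exact IsUnit.of_mul_eq_one _ ((mul_comm _ _).trans hd2)
    by_cases htr : E 0 0 + E 1 1 - 1 = 0
    · -- trace-one case : det(1 - (F-E)) = 2 + 6b is not a unit
      have hdet1 : (E 0 0 - 2) * (E 1 1 - 2) - E 0 1 * (E 1 0 - 6) = 2 + 6 * E 0 1 := by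
        linear_combination (E 0 0 - 2) * htr - h00
      rw [hdet1] at hu1
      exact not_isUnit_two_add_six hR (E 0 1) hu1
    · have key : (E 0 0 - E 1 1) * (E 0 0 + E 1 1 - 1) = 0 := by
        linear_combination h00 - h11
      have had : E 0 0 = E 1 1 := by
        rcases mul_eq_zero.mp key with h | h
        · exact sub_eq_zero.mp h
        · exact absurd h htr
      have hb0 : E 0 1 = 0 := by
        have h : E 0 1 * (E 0 0 + E 1 1 - 1) = 0 := by linear_combination h01
        rcases mul_eq_zero.mp h with h | h
        · exact h
        · exact absurd h htr
      have ha2 : E 0 0 * (E 0 0 - 1) = 0 := by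
        linear_combination h00 - E 1 0 * hb0
      rcases mul_eq_zero.mp ha2 with ha0 | ha1
      · -- E = 0 : det(1 - (F-E)) = 4 is not a unit
        have hdet1 : (E 0 0 - 2) * (E 1 1 - 2) - E 0 1 * (E 1 0 - 6) = 4 := by
          rw [← had, ha0, hb0]; ring
        rw [hdet1] at hu1
        have h4 : (2:ℤ) ∣ (((4:R)):ℚ).num := by
          have h : ((4:R):ℚ) = (4:ℚ) := by norm_cast
          rw [h]; norm_num
        exact not_unit_of_num hR Int.prime_two (Or.inl rfl) h4 hu1
      · -- E = 1 : det(1 + (F-E)) = 9 is not a unit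
        have ha1' : E 0 0 = 1 := sub_eq_zero.mp ha1
        have hdet2 : (4 - E 0 0) * (4 - E 1 1) - (-(E 0 1)) * (6 - E 1 0) = 9 := by
          rw [← had, ha1', hb0]; ring
        rw [hdet2] at hu2
        have h9 : (3:ℤ) ∣ (((9:R)):ℚ).num := by
          have h : ((9:R):ℚ) = (9:ℚ) := by norm_cast
          rw [h]; norm_num
        exact not_unit_of_num hR Int.prime_three (Or.inr rfl) h9 hu2
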